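/- An infinite group that is not cyclic cannot be written as the union of finitely many of its cyclic subgroups. -/

import Mathlib

open Subgroup Function Pointwise

/-- A group that embeds into a cyclic group is cyclic. -/
private lemma my_isCyclic_of_injective {G H : Type*} [Group G] [Group H] [IsCyclic H]
    (f : G →* H) (hf : Function.Injective f) : IsCyclic G := by
  have : IsCyclic f.range := Subgroup.isCyclic _
  exact isCyclic_of_surjective _ (MonoidHom.ofInjective hf).symm.surjective

/-- The subgroup `zpowers g` is a cyclic group. -/
private lemma my_zpowers_isCyclic {G : Type*} [Group G] (g : G) :
    IsCyclic (Subgroup.zpowers g) := by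
  refine ⟨⟨g, Subgroup.mem_zpowers g⟩, ?_⟩
  rintro ⟨x, hx⟩
  obtain ⟨k, hk⟩ := Subgroup.mem_zpowers_iff.mp hx
  refine Subgroup.mem_zpowers_iff.mpr ⟨k, ?_⟩
  ext
  simpa using hk

/-- An infinite group that is not cyclic cannot be written as the union of
finitely many of its cyclic subgroups: if an infinite group is covered by
finitely many cyclic subgroups, then it is cyclic. -/
theorem infinite_union_fin_cyclic_subgroups_isCyclic
    {G : Type*} [Group G] [Infinite G] (n : ℕ) (C : Fin n → Subgroup G)
    (hcyc : ∀ i, ∃ g : G, C i = Subgroup.zpowers g)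
    (hcover : ∀ x : G, ∃ i, x ∈ C i) :
    IsCyclic G := by
  classical
  -- the cosets `1 • C i` cover `G`
  have hcovers : ⋃ i ∈ (Finset.univ : Finset (Fin n)), (1 : G) • (C i : Set G) = Set.univ := by
    ext x
    simp only [Set.mem_iUnion, Set.mem_univ, iff_true, one_smul, Finset.mem_univ, exists_prop,
      true_and, SetLike.mem_coe]
    exact hcover x
  -- by B. H. Neumann's lemma, the cyclic subgroups of finite index already cover `G`
  have hfil := Subgroup.leftCoset_cover_filter_FiniteIndex hcovers
  have hcov' : ∀ x : G, ∃ i, (C i).FiniteIndex ∧ x ∈ C i := by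
    intro x
    have hx : x ∈ ⋃ k ∈ Finset.univ.filter (fun i => (C i).FiniteIndex),
        (1 : G) • (C k : Set G) := hfil ▸ Set.mem_univ x
    simp only [Set.mem_iUnion, one_smul, Finset.mem_filter, Finset.mem_univ, true_and,
      exists_prop, SetLike.mem_coe] at hx
    exact hx
  -- subgroups of finite index are infinite, so their generators have infinite order;
  -- in particular `G` is "torsion-free" on the covered elements
  have htf : ∀ x : G, ∀ k : ℕ, k ≠ 0 → x ^ k = 1 → x = 1 := by
    intro x k hk hxk
    obtain ⟨i, hfi, hxi⟩ := hcov' x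
    obtain ⟨g, hg⟩ := hcyc i
    -- `C i` is infinite
    have hinf : Infinite (C i) := by
      by_contra hfin
      rw [not_infinite_iff_finite] at hfin
      have h1 : Nat.card (C i) ≠ 0 := Nat.card_ne_zero.mpr ⟨One.instNonempty, hfin⟩
      have h2 : Nat.card (C i) * (C i).index = Nat.card G := (C i).card_mul_index
      have h3 : Nat.card G = 0 := Nat.card_eq_zero_of_infinite
      rw [h3] at h2
      exact Nat.mul_ne_zero h1 hfi.index_ne_zero h2
    rw [hg] at hxi hinf
    have hgord : ¬ IsOfFinOrder g := fun hford =>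
      (Set.infinite_coe_iff.mp hinf) hford.finite_zpowers
    obtain ⟨t, rfl⟩ := Subgroup.mem_zpowers_iff.mp hxi
    rw [← zpow_natCast, ← zpow_mul] at hxk
    have ht : t * (k : ℤ) = 0 := by
      by_contra h
      exact hgord (isOfFinOrder_iff_zpow_eq_one.mpr ⟨t * k, h, hxk⟩)
    rcases mul_eq_zero.mp ht with h | h
    · rw [h, zpow_zero]
    · exact absurd (Int.natCast_eq_zero.mp h) hk
  -- the intersection `K` of the finite-index members of the cover
  set S : Finset (Fin n) := Finset.univ.filter (fun i => (C i).FiniteIndex) with hS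
  set K : Subgroup G := ⨅ i ∈ S, C i with hKdef
  have hKfi : K.FiniteIndex := Subgroup.finiteIndex_iInf' _ (by
    intro i hi
    exact (Finset.mem_filter.mp hi).2)
  have hK_le : ∀ i, (C i).FiniteIndex → K ≤ C i := by
    intro i h
    exact iInf₂_le i (Finset.mem_filter.mpr ⟨Finset.mem_univ i, h⟩)
  -- `K` is central
  have hcentral : K ≤ Subgroup.center G := by
    intro k hk
    rw [Subgroup.mem_center_iff]
    intro x
    obtain ⟨i, hfi, hxi⟩ := hcov' x
    have hki : k ∈ C i := hK_le i hfi hk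
    obtain ⟨g, hg⟩ := hcyc i
    rw [hg] at hxi hki
    obtain ⟨a, rfl⟩ := Subgroup.mem_zpowers_iff.mp hxi
    obtain ⟨b, rfl⟩ := Subgroup.mem_zpowers_iff.mp hki
    rw [← zpow_add, ← zpow_add, add_comm]
  have hcfi : (Subgroup.center G).FiniteIndex := @Subgroup.finiteIndex_of_le _ _ K _ hKfi hcentral
  -- the transfer homomorphism `G →* center G` is injective, hence `G` is commutative
  let f := MonoidHom.transferCenterPow G
  have hf_inj : Function.Injective f := by
    intro x y hxy
    have h1 : x * y⁻¹ ∈ f.ker := by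
      rw [MonoidHom.mem_ker, map_mul, map_inv, hxy, mul_inv_cancel]
    have h2 : (x * y⁻¹) ^ (Subgroup.center G).index = 1 := by
      have := congrArg Subtype.val h1
      rwa [MonoidHom.transferCenterPow_apply] at this
    have := htf _ _ hcfi.index_ne_zero h2
    rwa [mul_inv_eq_one] at this
  have hcomm : ∀ x y : G, x * y = y * x := by
    intro x y
    apply hf_inj
    rw [map_mul, map_mul]
    exact Subtype.ext (Subgroup.mem_center_iff.mp (f y).2 (f x))
  -- `K` is normal, and `x ↦ x ^ K.index` is an injective homomorphism `G →* K`
  have hKnormal : K.Normal := by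
    refine ⟨fun a ha g => ?_⟩
    rwa [hcomm g a, mul_assoc, mul_inv_cancel, mul_one]
  let ψ : G →* K :=
    { toFun := fun x => ⟨x ^ K.index, K.pow_index_mem x⟩
      map_one' := by ext; simp
      map_mul' := by
        intro x y
        ext
        simp only [Subgroup.coe_mul]
        exact Commute.mul_pow (hcomm x y) _ }
  have hψ_inj : Function.Injective ψ := by
    intro x y hxy
    have h1 : (x * y⁻¹) ^ K.index = 1 := by
      have h0 : x ^ K.index = y ^ K.index := congrArg Subtype.val hxy
      rw [Commute.mul_pow ((hcomm x y⁻¹)), inv_pow, h0, mul_inv_cancel]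
    have := htf _ _ hKfi.index_ne_zero h1
    rwa [mul_inv_eq_one] at this
  -- finally, embed `G` into a cyclic subgroup of the cover
  obtain ⟨i₀, hfi₀, -⟩ := hcov' 1
  obtain ⟨g₀, hg₀⟩ := hcyc i₀
  have hKle₀ : K ≤ Subgroup.zpowers g₀ := hg₀ ▸ hK_le i₀ hfi₀
  have : IsCyclic (Subgroup.zpowers g₀) := my_zpowers_isCyclic g₀
  exact my_isCyclic_of_injective ((Subgroup.inclusion hKle₀).comp ψ)
    ((Subgroup.inclusion_injective hKle₀).comp hψ_inj)
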